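/- Let f ∈ F[x_1,...,x_n], let I = ⟨p_1(x_1),...,p_n(x_n)⟩ be a univariate ideal, let R be the unique remainder of f modulo I, and let R_r be the unique remainder of f modulo the partial ideal I_{[r]} = ⟨p_1(x_1),...,p_r(x_r)⟩. Then for any α_1,...,α_r ∈ F, the polynomial R(α_1,...,α_r, x_{r+1},...,x_n) equals the remainder of R_r(α_1,...,α_r, x_{r+1},...,x_n) modulo the ideal ⟨p_{r+1}(x_{r+1}),...,p_n(x_n)⟩. -/

import Mathlib

open MvPolynomial
namespace Stmt11Aux
variable {F : Type*} [Field F]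

lemma degreeOf_neg' {σ : Type*} (i : σ) (h : MvPolynomial σ F) :
    degreeOf i (-h) = degreeOf i h := by
  rw [degreeOf_eq_sup, degreeOf_eq_sup, support_neg]

lemma degreeOf_sub_le' {σ : Type*} (i : σ) (a b : MvPolynomial σ F) :
    degreeOf i (a - b) ≤ max (degreeOf i a) (degreeOf i b) := by
  rw [sub_eq_add_neg]
  refine (degreeOf_add_le _ _ _).trans ?_
  rw [degreeOf_neg']

lemma degreeOf_monomial_le' {σ : Type*} (m : σ →₀ ℕ) (a : F) (i : σ) :
    degreeOf i (monomial m a : MvPolynomial σ F) ≤ m i := by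
  classical
  refine degreeOf_le_iff.mpr fun m' hm' => ?_
  rcases Finset.mem_singleton.mp (support_monomial_subset hm') with rfl
  exact le_rfl

lemma degreeOf_aeval_X_le {σ : Type*} [DecidableEq σ] (q : Polynomial F) (i j : σ) :
    degreeOf j (Polynomial.aeval (X i) q : MvPolynomial σ F) ≤
      if j = i then q.natDegree else 0 := by
  rw [Polynomial.aeval_def, Polynomial.eval₂_eq_sum_range]
  refine (degreeOf_sum_le _ _ _).trans (Finset.sup_le fun k hk => ?_)
  refine (degreeOf_mul_le _ _ _).trans ?_
  rw [show (algebraMap F (MvPolynomial σ F)) (q.coeff k) = C (q.coeff k) from rfl, degreeOf_C,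
    zero_add]
  refine (degreeOf_pow_le _ _ _).trans ?_
  rw [degreeOf_X]
  rcases eq_or_ne j i with rfl | hne
  · simp only [eq_self_iff_true, if_true, mul_one]
    have := Finset.mem_range.mp hk
    omega
  · simp [hne]

lemma div_single {n : ℕ} (j : Fin n) (q : Polynomial F) (hq : q ≠ 0) (hd : 0 < q.natDegree)
    (h : MvPolynomial (Fin n) F) :
    ∃ h' : MvPolynomial (Fin n) F,
      h - h' ∈ Ideal.span {Polynomial.aeval (X j) q} ∧
      degreeOf j h' < q.natDegree ∧ (∀ i, i ≠ j → degreeOf i h' ≤ degreeOf i h) := by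
  classical
  suffices H : ∀ N : ℕ, ∀ h : MvPolynomial (Fin n) F, degreeOf j h ≤ N →
      ∃ h' : MvPolynomial (Fin n) F,
        h - h' ∈ Ideal.span {Polynomial.aeval (X j) q} ∧
        degreeOf j h' < q.natDegree ∧ (∀ i, i ≠ j → degreeOf i h' ≤ degreeOf i h) by
    exact H (degreeOf j h) h le_rfl
  intro N
  induction N using Nat.strong_induction_on with
  | _ N ih =>
    intro h hhN
    by_cases hlt : degreeOf j h < q.natDegree
    · exact ⟨h, by simp, hlt, fun _ _ => le_rfl⟩
    push_neg at hlt
    set d := q.natDegree with hdd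
    set Nh := degreeOf j h with hNh
    set c := q.leadingCoeff with hcc
    have hc : c ≠ 0 := Polynomial.leadingCoeff_ne_zero.mpr hq
    set g : MvPolynomial (Fin n) F := Polynomial.aeval (X j) q with hg
    set w : MvPolynomial (Fin n) F :=
      ∑ m ∈ h.support.filter (fun m => m j = Nh),
        monomial (m - Finsupp.single j d) (c⁻¹ * coeff m h) with hw
    set t : MvPolynomial (Fin n) F :=
      ∑ m ∈ h.support.filter (fun m => m j = Nh), monomial m (coeff m h) with ht
    set e : MvPolynomial (Fin n) F := Polynomial.aeval (X j) q.eraseLead with he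
    have hsplit : g = C c * (X j : MvPolynomial (Fin n) F) ^ d + e := by
      conv_lhs => rw [hg, ← q.eraseLead_add_monomial_natDegree_leadingCoeff]
      rw [map_add, Polynomial.aeval_monomial, add_comm]
      rfl
    have htw : w * (C c * (X j : MvPolynomial (Fin n) F) ^ d) = t := by
      rw [hw, ht, Finset.sum_mul]
      refine Finset.sum_congr rfl fun m hm => ?_
      rcases Finset.mem_filter.mp hm with ⟨hms, hmj⟩
      have hle : Finsupp.single j d ≤ m := by
        rw [Finsupp.single_le_iff, hmj]
        exact hlt
      rw [C_mul_X_pow_eq_monomial, monomial_mul, tsub_add_cancel_of_le hle,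
        mul_comm (c⁻¹) _, mul_assoc, inv_mul_cancel₀ hc, mul_one]
    have hcoefft : ∀ m : Fin n →₀ ℕ, coeff m t =
        if m ∈ h.support.filter (fun m => m j = Nh) then coeff m h else 0 := by
      intro m
      rw [ht, coeff_sum]
      simp_rw [coeff_monomial]
      exact Finset.sum_ite_eq' _ m (fun m' => coeff m' h)
    have hco : ∀ m : Fin n →₀ ℕ, coeff m (h - t) = if m j = Nh then 0 else coeff m h := by
      intro m
      rw [coeff_sub, hcoefft m]
      by_cases hmj : m j = Nh
      · rw [if_pos hmj]
        by_cases hms : m ∈ h.support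
        · have h1 : m ∈ h.support.filter (fun m => m j = Nh) := Finset.mem_filter.mpr ⟨hms, hmj⟩
          rw [if_pos h1, sub_self]
        · have h1 : m ∉ h.support.filter (fun m => m j = Nh) :=
            fun hc' => hms (Finset.mem_filter.mp hc').1
          rw [if_neg h1, notMem_support_iff.mp hms, sub_zero]
      · have h1 : m ∉ h.support.filter (fun m => m j = Nh) :=
          fun hc' => hmj (Finset.mem_filter.mp hc').2
        rw [if_neg hmj, if_neg h1, sub_zero]
    have hht : degreeOf j (h - t) ≤ Nh - 1 := by
      refine degreeOf_le_iff.mpr fun m hm => ?_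
      rw [mem_support_iff, hco m] at hm
      by_cases hmj : m j = Nh
      · rw [if_pos hmj] at hm; exact absurd rfl hm
      · rw [if_neg hmj] at hm
        have : m j ≤ Nh := monomial_le_degreeOf j (mem_support_iff.mpr hm)
        omega
    have hwj : degreeOf j w ≤ Nh - d := by
      rw [hw]
      refine (degreeOf_sum_le _ _ _).trans (Finset.sup_le fun m hm => ?_)
      refine (degreeOf_monomial_le' _ _ _).trans ?_
      rw [Finsupp.tsub_apply, Finsupp.single_eq_same, (Finset.mem_filter.mp hm).2]
    have hwi : ∀ i, i ≠ j → degreeOf i w ≤ degreeOf i h := by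
      intro i hij
      rw [hw]
      refine (degreeOf_sum_le _ _ _).trans (Finset.sup_le fun m hm => ?_)
      refine (degreeOf_monomial_le' _ _ _).trans ?_
      rw [Finsupp.tsub_apply, Finsupp.single_apply, if_neg (fun hji => hij hji.symm), tsub_zero]
      exact monomial_le_degreeOf i (Finset.mem_filter.mp hm).1
    have hej : degreeOf j e ≤ d - 1 := by
      refine (degreeOf_aeval_X_le _ _ _).trans ?_
      rw [if_pos rfl]
      exact q.eraseLead_natDegree_le
    have hgi : ∀ i, i ≠ j → degreeOf i g ≤ 0 := by
      intro i hij
      refine (degreeOf_aeval_X_le _ _ _).trans ?_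
      rw [if_neg hij]
    set h₂ := h - w * g with hh₂
    have hmemwg : h - h₂ ∈ Ideal.span {g} := by
      rw [hh₂, sub_sub_cancel]
      exact Ideal.mem_span_singleton.mpr (Dvd.intro_left w rfl)
    have hh₂j : degreeOf j h₂ ≤ Nh - 1 := by
      have : h₂ = (h - t) - w * e := by
        rw [hh₂, hsplit, mul_add, htw]
        ring
      rw [this]
      refine (degreeOf_sub_le' _ _ _).trans (max_le hht ?_)
      refine (degreeOf_mul_le _ _ _).trans ?_
      have := hwj; have := hej
      omega
    have hh₂i : ∀ i, i ≠ j → degreeOf i h₂ ≤ degreeOf i h := by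
      intro i hij
      rw [hh₂]
      refine (degreeOf_sub_le' _ _ _).trans (max_le le_rfl ?_)
      refine (degreeOf_mul_le _ _ _).trans ?_
      have := hwi i hij; have := hgi i hij
      omega
    have hNd : Nh - 1 < N := by omega
    obtain ⟨h', hmem', hdj', hoth'⟩ := ih (Nh - 1) hNd h₂ hh₂j
    refine ⟨h', ?_, hdj', fun i hij => (hoth' i hij).trans (hh₂i i hij)⟩
    have : h - h' = (h - h₂) + (h₂ - h') := by ring
    rw [this]
    exact Ideal.add_mem _ hmemwg hmem'

lemma div_multi {n : ℕ} (p : Fin n → Polynomial F) (hp : ∀ i, p i ≠ 0)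
    (hd : ∀ i, 0 < (p i).natDegree) (S : Finset (Fin n)) (h : MvPolynomial (Fin n) F) :
    ∃ h' : MvPolynomial (Fin n) F,
      h - h' ∈ Ideal.span
        ((fun i => Polynomial.aeval (X i : MvPolynomial (Fin n) F) (p i)) '' (S : Set (Fin n))) ∧
      (∀ i ∈ S, degreeOf i h' < (p i).natDegree) ∧
      (∀ i ∉ S, degreeOf i h' ≤ degreeOf i h) := by
  classical
  induction S using Finset.induction_on generalizing h with
  | empty => exact ⟨h, by simp, by simp, fun _ _ => le_rfl⟩
  | @insert j S hj ih =>
    obtain ⟨h₁, hmem₁, hS₁, hout₁⟩ := ih h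
    obtain ⟨h', hmem₂, hdj, hoth⟩ := div_single j (p j) (hp j) (hd j) h₁
    have himg : (fun i => Polynomial.aeval (X i : MvPolynomial (Fin n) F) (p i)) ''
        ((insert j S : Finset (Fin n)) : Set (Fin n))
        = insert (Polynomial.aeval (X j : MvPolynomial (Fin n) F) (p j))
          ((fun i => Polynomial.aeval (X i : MvPolynomial (Fin n) F) (p i)) '' (S : Set (Fin n))) := by
      rw [Finset.coe_insert, Set.image_insert_eq]
    refine ⟨h', ?_, ?_, ?_⟩
    · have hstep : h - h' = (h - h₁) + (h₁ - h') := by ring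
      rw [hstep, himg]
      refine Ideal.add_mem _ ?_ ?_
      · exact Ideal.span_mono (Set.subset_insert _ _) hmem₁
      · refine Ideal.span_mono ?_ hmem₂
        intro x hx
        rcases Set.mem_singleton_iff.mp hx with rfl
        exact Set.mem_insert _ _
    · intro i hi
      rcases Finset.mem_insert.mp hi with rfl | hiS
      · exact hdj
      · have hij : i ≠ j := fun hij => hj (hij ▸ hiS)
        exact lt_of_le_of_lt (hoth i hij) (hS₁ i hiS)
    · intro i hi
      have hij : i ≠ j := fun hij => hi (hij ▸ Finset.mem_insert_self j S)
      have hiS : i ∉ S := fun hiS => hi (Finset.mem_insert_of_mem hiS)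
      exact (hoth i hij).trans (hout₁ i hiS)

lemma coeff_mem_of_mem_span {R : Type*} [CommRing R] (q : Polynomial R) (hq : q.Monic)
    (T : Set R) (P : Polynomial R)
    (hmem : P ∈ Ideal.span (insert q (Polynomial.C '' T)))
    (hdeg : P.natDegree < q.natDegree ∨ P = 0) (k : ℕ) :
    P.coeff k ∈ Ideal.span T := by
  classical
  by_cases hP : P = 0
  · rw [hP, Polynomial.coeff_zero]; exact (Ideal.span T).zero_mem
  have hdeg' : P.natDegree < q.natDegree := hdeg.resolve_right hP
  set J := Ideal.span T with hJ
  set ψ : Polynomial R →+* Polynomial (R ⧸ J) := Polynomial.mapRingHom (Ideal.Quotient.mk J)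
    with hψ
  have hψP : ψ P ∈ Ideal.span {q.map (Ideal.Quotient.mk J)} := by
    have h1 : ψ P ∈ Ideal.map ψ (Ideal.span (insert q (Polynomial.C '' T))) :=
      Ideal.mem_map_of_mem _ hmem
    rw [Ideal.map_span] at h1
    refine Ideal.span_le.mpr ?_ h1
    rintro x ⟨y, hy, rfl⟩
    rcases Set.mem_insert_iff.mp hy with rfl | ⟨t, ht, rfl⟩
    · exact Ideal.subset_span rfl
    · have ht0 : (Ideal.Quotient.mk J) t = 0 :=
        Ideal.Quotient.eq_zero_iff_mem.mpr (Ideal.subset_span ht)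
      have : ψ (Polynomial.C t) = 0 := by
        rw [hψ, Polynomial.coe_mapRingHom, Polynomial.map_C, ht0, map_zero]
      rw [this]
      exact Ideal.zero_mem _
  obtain ⟨A, hA⟩ := Ideal.mem_span_singleton'.mp hψP
  have hqbar : (q.map (Ideal.Quotient.mk J)).Monic := hq.map _
  have hψP0 : ψ P = 0 := by
    by_contra h0
    have hA0 : A ≠ 0 := by
      rintro rfl
      rw [zero_mul] at hA
      exact h0 hA.symm
    have hld : A.leadingCoeff * (q.map (Ideal.Quotient.mk J)).leadingCoeff ≠ 0 := by
      rw [hqbar.leadingCoeff, mul_one]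
      exact Polynomial.leadingCoeff_ne_zero.mpr hA0
    haveI : Nontrivial (R ⧸ J) :=
      Polynomial.nontrivial_iff.mp (nontrivial_of_ne _ _ h0)
    have hdeq : (ψ P).natDegree = A.natDegree + q.natDegree := by
      rw [← hA, Polynomial.natDegree_mul' hld, hq.natDegree_map]
    have hle : (ψ P).natDegree ≤ P.natDegree := by
      rw [hψ, Polynomial.coe_mapRingHom]
      exact Polynomial.natDegree_map_le
    omega
  have : (Ideal.Quotient.mk J) (P.coeff k) = 0 := by
    have := congrArg (fun Q => Polynomial.coeff Q k) hψP0
    simpa [hψ, Polynomial.coeff_map] using this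
  exact Ideal.Quotient.eq_zero_iff_mem.mp this

lemma eq_zero_of_mem_span_monic :
    ∀ {n : ℕ} (p : Fin n → Polynomial F), (∀ i, (p i).Monic) →
    ∀ h : MvPolynomial (Fin n) F,
      h ∈ Ideal.span
        ((fun i => Polynomial.aeval (X i : MvPolynomial (Fin n) F) (p i)) '' Set.univ) →
      (∀ i, degreeOf i h < (p i).natDegree) → h = 0 := by
  intro n
  induction n with
  | zero =>
    intro p _ h hmem _
    have himg : ((fun i => Polynomial.aeval (X i : MvPolynomial (Fin 0) F) (p i)) ''
        Set.univ) = ∅ := by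
      simp [Set.univ_eq_empty_iff.mpr inferInstance]
    rwa [himg, Ideal.span_empty, Ideal.mem_bot] at hmem
  | succ n ihn =>
    intro p hmonic h hmem hdeg
    have hφ0 : finSuccEquiv F n (Polynomial.aeval (X 0) (p 0)) =
        (p 0).map (algebraMap F (MvPolynomial (Fin n) F)) := by
      rw [← Polynomial.aeval_algHom_apply, finSuccEquiv_X_zero]
      have hkey : (Polynomial.aeval (Polynomial.X : Polynomial (MvPolynomial (Fin n) F))
          : Polynomial F →ₐ[F] Polynomial (MvPolynomial (Fin n) F))
          = Polynomial.mapAlgHom (Algebra.ofId F (MvPolynomial (Fin n) F)) := by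
        apply Polynomial.algHom_ext
        simp
      rw [hkey]
      rfl
    have hφsucc : ∀ i : Fin n, finSuccEquiv F n (Polynomial.aeval (X i.succ) (p i.succ)) =
        Polynomial.C (Polynomial.aeval (X i : MvPolynomial (Fin n) F) (p i.succ)) := by
      intro i
      rw [← Polynomial.aeval_algHom_apply, finSuccEquiv_X_succ]
      exact Polynomial.aeval_algHom_apply
        (Polynomial.CAlgHom (R := F) (A := MvPolynomial (Fin n) F)) (X i) (p i.succ)
    have hPmem := Ideal.mem_map_of_mem
      ((finSuccEquiv F n : MvPolynomial (Fin (n+1)) F ≃ₐ[F] Polynomial (MvPolynomial (Fin n) F))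
        : MvPolynomial (Fin (n+1)) F →+* Polynomial (MvPolynomial (Fin n) F)) hmem
    rw [Ideal.map_span] at hPmem
    simp only [RingHom.coe_coe, Set.image_image, Set.image_univ] at hPmem
    have hrange : (Set.range fun i : Fin (n+1) =>
          finSuccEquiv F n (Polynomial.aeval (X i : MvPolynomial (Fin (n+1)) F) (p i)))
        = insert ((p 0).map (algebraMap F (MvPolynomial (Fin n) F)))
          (Polynomial.C '' Set.range
            (fun i : Fin n => Polynomial.aeval (X i : MvPolynomial (Fin n) F) (p i.succ))) := by
      rw [Fin.range_fin_succ]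
      have h2 : Set.range (Fin.tail fun i : Fin (n+1) =>
          finSuccEquiv F n (Polynomial.aeval (X i : MvPolynomial (Fin (n+1)) F) (p i)))
          = Polynomial.C '' Set.range (fun i : Fin n =>
              Polynomial.aeval (X i : MvPolynomial (Fin n) F) (p i.succ)) := by
        rw [← Set.range_comp]
        congr 1
        funext i
        exact hφsucc i
      rw [h2, hφ0]
    simp only [← Set.range_comp, Function.comp_def] at hPmem
    rw [hrange] at hPmem
    have hq0monic : ((p 0).map (algebraMap F (MvPolynomial (Fin n) F))).Monic :=
      (hmonic 0).map _
    have hq0deg : ((p 0).map (algebraMap F (MvPolynomial (Fin n) F))).natDegree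
        = (p 0).natDegree := (hmonic 0).natDegree_map _
    have hcoeffmem : ∀ k, (finSuccEquiv F n h).coeff k ∈ Ideal.span
        (Set.range (fun i : Fin n =>
          Polynomial.aeval (X i : MvPolynomial (Fin n) F) (p i.succ))) := by
      intro k
      refine coeff_mem_of_mem_span _ hq0monic _ _ hPmem (Or.inl ?_) k
      rw [hq0deg, natDegree_finSuccEquiv]
      exact hdeg 0
    have hcoeff0 : ∀ k, (finSuccEquiv F n h).coeff k = 0 := by
      intro k
      refine ihn (fun i => p i.succ) (fun i => hmonic i.succ) _ ?_ ?_
      · rw [Set.image_univ]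
        exact hcoeffmem k
      · intro i
        exact lt_of_le_of_lt (degreeOf_coeff_finSuccEquiv h i k) (hdeg i.succ)
    have hφh : finSuccEquiv F n h = 0 :=
      Polynomial.ext fun k => by rw [hcoeff0 k, Polynomial.coeff_zero]
    exact (finSuccEquiv F n).injective (hφh.trans (map_zero _).symm)

lemma eq_zero_of_mem_span_bounds {n : ℕ} (p : Fin n → Polynomial F) (hp : ∀ i, p i ≠ 0)
    (h : MvPolynomial (Fin n) F)
    (hmem : h ∈ Ideal.span
      ((fun i => Polynomial.aeval (X i : MvPolynomial (Fin n) F) (p i)) '' Set.univ))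
    (hdeg : ∀ i, degreeOf i h < (p i).natDegree) : h = 0 := by
  set q : Fin n → Polynomial F := fun i => p i * Polynomial.C (p i).leadingCoeff⁻¹ with hqdef
  have hqmonic : ∀ i, (q i).Monic := fun i => Polynomial.monic_mul_leadingCoeff_inv (hp i)
  have hqdeg : ∀ i, (q i).natDegree = (p i).natDegree := fun i =>
    Polynomial.natDegree_mul_leadingCoeff_inv _ (hp i)
  have haq : ∀ i, Polynomial.aeval (X i : MvPolynomial (Fin n) F) (q i)
      = Polynomial.aeval (X i : MvPolynomial (Fin n) F) (p i) * C ((p i).leadingCoeff)⁻¹ := by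
    intro i
    rw [hqdef, map_mul, Polynomial.aeval_C]
    rfl
  have hspan : Ideal.span ((fun i => Polynomial.aeval (X i : MvPolynomial (Fin n) F) (q i)) ''
        Set.univ)
      = Ideal.span ((fun i => Polynomial.aeval (X i : MvPolynomial (Fin n) F) (p i)) ''
        Set.univ) := by
    apply le_antisymm <;> refine Ideal.span_le.mpr ?_
    · rintro x ⟨i, -, rfl⟩
      have hq' : (fun i => Polynomial.aeval (X i : MvPolynomial (Fin n) F) (q i)) i
          = Polynomial.aeval (X i : MvPolynomial (Fin n) F) (p i)
            * C ((p i).leadingCoeff)⁻¹ := haq i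
      rw [hq']
      exact Ideal.mul_mem_right _ _ (Ideal.subset_span ⟨i, Set.mem_univ i, rfl⟩)
    · rintro x ⟨i, -, rfl⟩
      have : Polynomial.aeval (X i : MvPolynomial (Fin n) F) (p i)
          = Polynomial.aeval (X i : MvPolynomial (Fin n) F) (q i) * C ((p i).leadingCoeff) := by
        rw [haq i, mul_assoc, ← C_mul, inv_mul_cancel₀ (Polynomial.leadingCoeff_ne_zero.mpr
          (hp i)), C_1, mul_one]
      have hp' : (fun i => Polynomial.aeval (X i : MvPolynomial (Fin n) F) (p i)) i
          = Polynomial.aeval (X i : MvPolynomial (Fin n) F) (q i)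
            * C ((p i).leadingCoeff) := this
      rw [hp']
      exact Ideal.mul_mem_right _ _ (Ideal.subset_span ⟨i, Set.mem_univ i, rfl⟩)
  refine eq_zero_of_mem_span_monic q hqmonic h ?_ ?_
  · rw [hspan]; exact hmem
  · intro i; rw [hqdeg i]; exact hdeg i

lemma degreeOf_bind_le {n r : ℕ} (α : Fin n → F) (j : Fin n) (hj : r ≤ (j : ℕ))
    (h : MvPolynomial (Fin n) F) :
    degreeOf j (bind₁ (fun i : Fin n => if (i : ℕ) < r then C (α i) else X i) h)
      ≤ degreeOf j h := by
  classical
  conv_lhs => rw [h.as_sum]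
  rw [map_sum]
  refine (degreeOf_sum_le _ _ _).trans ?_
  refine Finset.sup_le fun m hm => le_trans ?_ (monomial_le_degreeOf j hm)
  rw [bind₁_monomial]
  refine (degreeOf_mul_le _ _ _).trans ?_
  rw [degreeOf_C, zero_add]
  refine (degreeOf_prod_le _ _ _).trans ?_
  refine le_trans (Finset.sum_le_sum (f := fun i : Fin n =>
      degreeOf j ((if (i : ℕ) < r then C (α i) else X i) ^ m i))
      (g := fun i : Fin n => if i = j then m j else 0) fun i _ => ?_) ?_
  · show degreeOf j ((if (i : ℕ) < r then C (α i) else X i) ^ m i)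
        ≤ if i = j then m j else 0
    by_cases hij : i = j
    · subst hij
      rw [if_pos rfl, if_neg (not_lt.mpr hj)]
      refine (degreeOf_pow_le _ _ _).trans ?_
      rw [degreeOf_X, if_pos rfl, mul_one]
    · rw [if_neg hij]
      by_cases hir : (i : ℕ) < r
      · rw [if_pos hir, ← C_pow, degreeOf_C]
      · rw [if_neg hir]
        refine (degreeOf_pow_le _ _ _).trans ?_
        rw [degreeOf_X, if_neg (fun hji => hij hji.symm), mul_zero]
  · rw [Finset.sum_ite_eq' m.support j (fun _ => m j)]
    split_ifs <;> omega

lemma bind_mem_span {n r : ℕ} (p : Fin n → Polynomial F) (α : Fin n → F)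
    {x : MvPolynomial (Fin n) F}
    (hx : x ∈ Ideal.span ((fun i => Polynomial.aeval (X i : MvPolynomial (Fin n) F) (p i)) ''
      {i : Fin n | r ≤ (i : ℕ)})) :
    bind₁ (fun i : Fin n => if (i : ℕ) < r then C (α i) else X i) x ∈
      Ideal.span ((fun i => Polynomial.aeval (X i : MvPolynomial (Fin n) F) (p i)) ''
        {i : Fin n | r ≤ (i : ℕ)}) := by
  classical
  set σm : Fin n → MvPolynomial (Fin n) F :=
    fun i => if (i : ℕ) < r then C (α i) else X i with hσm
  have hmap := Ideal.mem_map_of_mem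
    ((bind₁ σm : MvPolynomial (Fin n) F →ₐ[F] MvPolynomial (Fin n) F).toRingHom) hx
  rw [Ideal.map_span] at hmap
  refine Ideal.span_le.mpr ?_ hmap
  rintro y ⟨z, ⟨i, hi, rfl⟩, rfl⟩
  have hfix : (bind₁ σm : MvPolynomial (Fin n) F →ₐ[F] MvPolynomial (Fin n) F).toRingHom
      ((fun i => Polynomial.aeval (X i : MvPolynomial (Fin n) F) (p i)) i)
      = Polynomial.aeval (X i : MvPolynomial (Fin n) F) (p i) := by
    show bind₁ σm (Polynomial.aeval (X i : MvPolynomial (Fin n) F) (p i)) = _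
    rw [← Polynomial.aeval_algHom_apply, bind₁_X_right]
    have hσi : σm i = X i := if_neg (not_lt.mpr (by exact hi))
    rw [hσi]
  rw [hfix]
  exact Ideal.subset_span ⟨i, hi, rfl⟩

end Stmt11Aux

/-- `R` is the remainder of `f` modulo the univariate ideal generated by the
polynomials `p i (x_i)` for `i ∈ s`. -/
def IsRemainder {F : Type*} [Field F] {n : ℕ} (p : Fin n → Polynomial F)
    (s : Set (Fin n)) (f R : MvPolynomial (Fin n) F) : Prop :=
  f - R ∈ Ideal.span ((fun i => Polynomial.aeval (X i : MvPolynomial (Fin n) F) (p i)) '' s) ∧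
  ((∀ i ∈ s, R.degreeOf i < (p i).natDegree) ∨ R = 0)

theorem stmt_11 (F : Type*) [Field F] (n r : ℕ) (hr : r ≤ n)
    (p : Fin n → Polynomial F) (hp : ∀ i, p i ≠ 0)
    (f R Rr : MvPolynomial (Fin n) F) (α : Fin n → F)
    (hR : IsRemainder p Set.univ f R)
    (hRr : IsRemainder p {i : Fin n | (i : ℕ) < r} f Rr) :
    IsRemainder p {i : Fin n | r ≤ (i : ℕ)}
      (bind₁ (fun i : Fin n => if (i : ℕ) < r then C (α i) else X i) Rr)
      (bind₁ (fun i : Fin n => if (i : ℕ) < r then C (α i) else X i) R) := by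
  classical
  by_cases hdeg : ∀ i, 0 < (p i).natDegree
  · have hRb : ∀ i, degreeOf i R < (p i).natDegree := by
      rcases hR.2 with hb | h0
      · exact fun i => hb i (Set.mem_univ i)
      · intro i; rw [h0, degreeOf_zero]; exact hdeg i
    have hRrb : ∀ i : Fin n, (i : ℕ) < r → degreeOf i Rr < (p i).natDegree := by
      rcases hRr.2 with hb | h0
      · exact fun i hi => hb i hi
      · intro i _; rw [h0, degreeOf_zero]; exact hdeg i
    have hDmem : Rr - R ∈ Ideal.span
        ((fun i => Polynomial.aeval (X i : MvPolynomial (Fin n) F) (p i)) '' Set.univ) := by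
      have h2 : f - Rr ∈ Ideal.span
          ((fun i => Polynomial.aeval (X i : MvPolynomial (Fin n) F) (p i)) '' Set.univ) :=
        Ideal.span_mono (Set.image_mono (Set.subset_univ _)) hRr.1
      have h3 := Ideal.sub_mem _ hR.1 h2
      have h4 : (f - R) - (f - Rr) = Rr - R := by ring
      rw [h4] at h3
      exact h3
    obtain ⟨D', hD'mem, hD'in, hD'out⟩ :=
      Stmt11Aux.div_multi p hp hdeg (Finset.univ.filter fun i : Fin n => r ≤ (i : ℕ)) (Rr - R)
    have hSet : (((Finset.univ.filter fun i : Fin n => r ≤ (i : ℕ)) : Finset (Fin n))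
        : Set (Fin n)) = {i : Fin n | r ≤ (i : ℕ)} := by
      ext i; simp
    rw [hSet] at hD'mem
    have hD'0 : D' = 0 := by
      refine Stmt11Aux.eq_zero_of_mem_span_bounds p hp D' ?_ ?_
      · have h5 : (Rr - R) - D' ∈ Ideal.span
            ((fun i => Polynomial.aeval (X i : MvPolynomial (Fin n) F) (p i)) '' Set.univ) :=
          Ideal.span_mono (Set.image_mono (Set.subset_univ _)) hD'mem
        have h6 := Ideal.sub_mem _ hDmem h5
        rwa [sub_sub_cancel] at h6
      · intro i
        by_cases hi : r ≤ (i : ℕ)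
        · exact hD'in i (by simp [hi])
        · refine lt_of_le_of_lt (hD'out i (by simp [hi])) ?_
          exact lt_of_le_of_lt (Stmt11Aux.degreeOf_sub_le' i Rr R)
            (max_lt (hRrb i (not_le.mp hi)) (hRb i))
    rw [hD'0, sub_zero] at hD'mem
    constructor
    · have hbm := Stmt11Aux.bind_mem_span p α hD'mem
      rwa [map_sub] at hbm
    · left
      intro i hi
      exact lt_of_le_of_lt (Stmt11Aux.degreeOf_bind_le α i hi R) (hRb i)
  · push_neg at hdeg
    obtain ⟨i0, hi0⟩ := hdeg
    have hd0 : (p i0).natDegree = 0 := by omega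
    have hR0 : R = 0 := by
      rcases hR.2 with hb | h0
      · have := hb i0 (Set.mem_univ i0); omega
      · exact h0
    refine ⟨?_, Or.inr (by rw [hR0, map_zero])⟩
    rw [hR0, map_zero, sub_zero]
    by_cases hc : (i0 : ℕ) < r
    · have hRr0 : Rr = 0 := by
        rcases hRr.2 with hb | h0
        · have := hb i0 hc; omega
        · exact h0
      rw [hRr0, map_zero]
      exact Ideal.zero_mem _
    · have ha : (p i0).coeff 0 ≠ 0 := by
        intro h0
        apply hp i0
        have h1 := Polynomial.eq_C_of_natDegree_eq_zero hd0
        rw [h1, h0, map_zero]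
      have hgen : Polynomial.aeval (X i0 : MvPolynomial (Fin n) F) (p i0)
          = C ((p i0).coeff 0) := by
        conv_lhs => rw [Polynomial.eq_C_of_natDegree_eq_zero hd0]
        rw [Polynomial.aeval_C]
        rfl
      have hmem : C ((p i0).coeff 0) ∈ Ideal.span
          ((fun i => Polynomial.aeval (X i : MvPolynomial (Fin n) F) (p i)) ''
            {i : Fin n | r ≤ (i : ℕ)}) := by
        rw [← hgen]
        exact Ideal.subset_span ⟨i0, not_lt.mp hc, rfl⟩
      have h1 : (1 : MvPolynomial (Fin n) F) ∈ Ideal.span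
          ((fun i => Polynomial.aeval (X i : MvPolynomial (Fin n) F) (p i)) ''
            {i : Fin n | r ≤ (i : ℕ)}) := by
        have h2 := Ideal.mul_mem_right (C ((p i0).coeff 0)⁻¹) _ hmem
        rwa [← C_mul, mul_inv_cancel₀ ha, C_1] at h2
      have htop := (Ideal.eq_top_iff_one _).mpr h1
      rw [htop]
      exact Submodule.mem_top
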